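/- Let E be a real inner product space, x, q ∈ E, r ≥ 0, and set d := dist(q, x). Assume d ≥ r. Then there exists a point y ∈ E (namely y = x + ((d − r)/(2d)) · (q − x) when d > 0) such that the closed ball of center y and radius (d + r)/2 contains both q and the entire closed ball of center x and radius r. Consequently, for any nonempty finite set P contained in the closed ball of center x and radius r, the minimum enclosing radius satisfies r(P ∪ {q}) ≤ (1/2)(dist(q, x) + r). -/

import Mathlib

open scoped Classical

/-- The minimum enclosing radius of a finite set `Q` of points in a real inner product
space: the infimum over centers `x` of the maximum distance from `x` to the points of `Q`. -/
noncomputable def mebRadius {E : Type*} [NormedAddCommGroup E] [InnerProductSpace ℝ E]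
    (Q : Finset E) : ℝ :=
  ⨅ x : E, ⨆ p ∈ Q, dist x p

/-- Let `x, q` be points of a real inner product space, `r ≥ 0`, `d := dist q x`, and
assume `d ≥ r`.  Then there is a point `y` such that the closed ball of center `y` and
radius `(d + r)/2` contains both `q` and the whole closed ball of center `x` and radius
`r`.  Consequently, for any nonempty finite set `P` contained in the closed ball of center
`x` and radius `r`, the minimum enclosing radius satisfies
`r(P ∪ {q}) ≤ (1/2)(dist(q, x) + r)`. -/
theorem mebRadius_insert_upper_bound {E : Type*} [NormedAddCommGroup E]
    [InnerProductSpace ℝ E] (x q : E) (r : ℝ) (hr : 0 ≤ r) (hd : r ≤ dist q x) :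
    (∃ y : E, q ∈ Metric.closedBall y ((dist q x + r) / 2) ∧
      Metric.closedBall x r ⊆ Metric.closedBall y ((dist q x + r) / 2)) ∧
    ∀ P : Finset E, P.Nonempty → (P : Set E) ⊆ Metric.closedBall x r →
      mebRadius (insert q P) ≤ (1 / 2) * (dist q x + r) := by
  set d := dist q x with hdd
  have hd0 : 0 ≤ d := dist_nonneg
  -- construct the witness y
  obtain ⟨y, hyq, hyx⟩ : ∃ y : E, dist q y ≤ (d + r) / 2 ∧ dist y x ≤ (d - r) / 2 := by
    rcases eq_or_lt_of_le hd0 with h0 | h0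
    · refine ⟨x, ?_, ?_⟩
      · have hxq : dist x q = d := by rw [dist_comm]
        linarith
      · simp; linarith
    · have hne : (2 : ℝ) * d ≠ 0 := by positivity
      have hc1 : (d - r) / (2 * d) ≤ 1 := by
        rw [div_le_one (by linarith)]; linarith
      have hc0 : 0 ≤ (d - r) / (2 * d) := by
        apply div_nonneg <;> linarith
      refine ⟨x + ((d - r) / (2 * d)) • (q - x), ?_, ?_⟩
      · have h1 : q - (x + ((d - r) / (2 * d)) • (q - x))
            = (1 - (d - r) / (2 * d)) • (q - x) := by
          rw [sub_smul, one_smul]; abel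
        have h2 : ‖q - x‖ = d := by rw [← dist_eq_norm]
        rw [dist_eq_norm, h1, norm_smul, Real.norm_eq_abs,
          abs_of_nonneg (by linarith), h2]
        have : (1 - (d - r) / (2 * d)) * d = (d + r) / 2 := by
          field_simp; ring
        linarith
      · have h1 : x + ((d - r) / (2 * d)) • (q - x) - x
            = ((d - r) / (2 * d)) • (q - x) := by abel
        have h2 : ‖q - x‖ = d := by rw [← dist_eq_norm]
        rw [dist_eq_norm, h1, norm_smul, Real.norm_eq_abs, abs_of_nonneg hc0, h2]
        have : (d - r) / (2 * d) * d = (d - r) / 2 := by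
          field_simp
        linarith
  have hball : Metric.closedBall x r ⊆ Metric.closedBall y ((d + r) / 2) := by
    intro z hz
    simp only [Metric.mem_closedBall] at *
    calc dist z y ≤ dist z x + dist x y := dist_triangle z x y
      _ ≤ r + (d - r) / 2 := by rw [dist_comm x y]; linarith
      _ = (d + r) / 2 := by ring
  refine ⟨⟨y, Metric.mem_closedBall.mpr hyq, hball⟩, ?_⟩
  intro P hP hPsub
  have key : ∀ p ∈ insert q P, dist y p ≤ (d + r) / 2 := by
    intro p hp
    rcases Finset.mem_insert.mp hp with rfl | hp
    · rw [dist_comm]; exact hyq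
    · exact Metric.mem_closedBall'.mp (hball (hPsub hp))
  have hbdd : BddBelow (Set.range fun z : E => ⨆ p ∈ (insert q P : Finset E), dist z p) := by
    refine ⟨0, ?_⟩
    rintro _ ⟨z, rfl⟩
    exact Real.iSup_nonneg fun p => Real.iSup_nonneg fun _ => dist_nonneg
  calc mebRadius (insert q P) ≤ ⨆ p ∈ (insert q P : Finset E), dist y p := ciInf_le hbdd y
    _ ≤ (d + r) / 2 := by
        refine Real.iSup_le (fun p => Real.iSup_le (fun hp => key p hp) (by linarith)) (by linarith)
    _ = (1 / 2) * (d + r) := by ring
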